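/- Let M be a matroid of rank at least 2 on ground set E, let N be a cyclic reduction of M (that is, {∅, cyc_M(E)} ⊆ Z(N) ⊆ Z(M) and rank_N(Z) = rank_M(Z) for all Z ∈ Z(N)). Then for every flat F of N there exists a flat G of M with F ⊆ G and rank_N(F) = rank_M(G). In particular, rank_M(A) ≤ rank_N(A) for all A ⊆ E. -/

import Mathlib

open Matroid Set
open scoped Classical

variable {α : Type*}

/-- A circuit of a matroid: a minimal dependent set. -/
def Matroid.Circuit' (M : Matroid α) (C : Set α) : Prop :=
  M.Dep C ∧ ∀ D, D ⊂ C → M.Indep D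

/-- The cyclic part `cyc_M(F)` of a set `F`: the union of all circuits of `M` contained
in `F`. -/
def Matroid.cyc (M : Matroid α) (F : Set α) : Set α :=
  ⋃₀ {C | M.Circuit' C ∧ C ⊆ F}

/-- The (extended) rank of a set in a matroid: the supremum of the cardinalities of the
independent subsets. -/
noncomputable def Matroid.eRk' (M : Matroid α) (X : Set α) : ℕ∞ :=
  ⨆ I ∈ {I | M.Indep I ∧ I ⊆ X}, I.encard

/-- The rank of a matroid. -/
noncomputable def Matroid.rk' (M : Matroid α) : ℕ∞ := M.eRk' M.E

/-- A matroid is loopfree if every element of the ground set is independent. -/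
def Matroid.Loopless' (M : Matroid α) : Prop := ∀ e ∈ M.E, M.Indep {e}

/-- `U` is the matroid union `M ∨ N`: its independent sets are exactly the unions of an
independent set of `M` and an independent set of `N`. -/
def IsMatroidUnion (M N U : Matroid α) : Prop :=
  U.E = M.E ∧ ∀ X, U.Indep X ↔ ∃ I J, M.Indep I ∧ N.Indep J ∧ X = I ∪ J

/-- `P` is the matroid intersection `M ∧ N := (M* ∨ N*)*`. -/
def IsMatroidInter (M N P : Matroid α) : Prop :=
  ∃ U, IsMatroidUnion M✶ N✶ U ∧ P = U✶

/-- Contraction of a set in a matroid, defined by duality: `M/A = (M* \ A)*`. -/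
def Matroid.contract' (M : Matroid α) (A : Set α) : Matroid α := (M✶ ↾ (M.E \ A))✶

/-- A cyclic flat: a flat which is the union of the circuits contained in it. -/
def Matroid.CyclicFlat (M : Matroid α) (F : Set α) : Prop :=
  M.IsFlat F ∧ F = M.cyc F

/-- A nested matroid: one whose cyclic flats form a chain under inclusion. -/
def Matroid.Nested (M : Matroid α) : Prop := IsChain (· ⊆ ·) {F | M.CyclicFlat F}

section Aux

variable {M : Matroid α} {X Y Z F I J C D : Set α} {e : α}

lemma Matroid.Indep.encard_le_eRk' (hI : M.Indep I) (hIX : I ⊆ X) :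
    I.encard ≤ M.eRk' X :=
  le_iSup₂ (f := fun I (_ : I ∈ {I | M.Indep I ∧ I ⊆ X}) => I.encard) I ⟨hI, hIX⟩

lemma Matroid.eRk'_le_iff {b : ℕ∞} :
    M.eRk' X ≤ b ↔ ∀ I, M.Indep I → I ⊆ X → I.encard ≤ b := by
  simp [Matroid.eRk', iSup₂_le_iff]

lemma Matroid.IsBasis.eRk'_eq (hI : M.IsBasis I X) : M.eRk' X = I.encard := by
  refine le_antisymm (Matroid.eRk'_le_iff.2 fun J hJ hJX => ?_)
    (hI.indep.encard_le_eRk' hI.subset)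
  have hJR : (M ↾ X).Indep J := restrict_indep_iff.2 ⟨hJ, hJX⟩
  obtain ⟨B, hB, hJB⟩ := hJR.exists_isBase_superset
  have hIB : (M ↾ X).IsBase I := (isBase_restrict_iff hI.subset_ground).2 hI
  exact (encard_mono hJB).trans (hB.encard_eq_encard_of_isBase hIB).le

lemma Matroid.eRk'_mono (M : Matroid α) (h : X ⊆ Y) : M.eRk' X ≤ M.eRk' Y :=
  Matroid.eRk'_le_iff.2 fun _ hI hIX => hI.encard_le_eRk' (hIX.trans h)

lemma Matroid.eRk'_le_encard (M : Matroid α) (X : Set α) : M.eRk' X ≤ X.encard :=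
  Matroid.eRk'_le_iff.2 fun _ _ hIX => encard_mono hIX

lemma Matroid.eRk'_closure (M : Matroid α) (hX : X ⊆ M.E) :
    M.eRk' (M.closure X) = M.eRk' X := by
  obtain ⟨I, hI⟩ := M.exists_isBasis X hX
  rw [hI.isBasis_closure_right.eRk'_eq, hI.eRk'_eq]

lemma Matroid.flat_closure (M : Matroid α) (X : Set α) : M.IsFlat (M.closure X) :=
  ⟨fun _ _ hIF hIY => hIY.subset_closure.trans
      (by rw [hIF.closure_eq_closure, closure_closure]),
    M.closure_subset_ground X⟩

lemma Matroid.eRk'_le_add_encard_diff (M : Matroid α) (X Z : Set α) :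
    M.eRk' X ≤ M.eRk' Z + (X \ Z).encard := by
  refine Matroid.eRk'_le_iff.2 fun I hI hIX => ?_
  rw [← encard_diff_add_encard_inter I Z, add_comm]
  exact add_le_add ((hI.inter_right Z).encard_le_eRk' inter_subset_right)
    (encard_mono (diff_subset_diff_left hIX))

lemma Matroid.cyc_subset (M : Matroid α) (F : Set α) : M.cyc F ⊆ F :=
  sUnion_subset fun _ hC => hC.2

lemma Matroid.mem_cyc_iff :
    e ∈ M.cyc F ↔ ∃ C, M.Circuit' C ∧ C ⊆ F ∧ e ∈ C := by
  simp only [Matroid.cyc, mem_sUnion, mem_setOf_eq]; tauto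

/-- Every finite dependent set contains a circuit. -/
lemma Matroid.Dep.exists_circuit'_subset (hD : M.Dep D) (hfin : D.Finite) :
    ∃ C, M.Circuit' C ∧ C ⊆ D := by
  obtain ⟨n, hn⟩ : ∃ n, D.ncard ≤ n := ⟨D.ncard, le_rfl⟩
  induction n generalizing D with
  | zero =>
    refine ⟨D, ⟨hD, fun D' hD' => ?_⟩, Subset.rfl⟩
    have h0 := hD'.trans_eq ((ncard_eq_zero hfin).1 (Nat.le_zero.1 hn))
    exact absurd h0.2 (by simp [h0.1.antisymm (empty_subset _)])
  | succ n ih =>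
    by_cases h : ∀ D', D' ⊂ D → M.Indep D'
    · exact ⟨D, ⟨hD, h⟩, Subset.rfl⟩
    push_neg at h
    obtain ⟨D', hD'D, hD'⟩ := h
    have hD'dep : M.Dep D' := ⟨hD', hD'D.subset.trans hD.subset_ground⟩
    obtain ⟨C, hC, hCD'⟩ := ih hD'dep (hfin.subset hD'D.subset)
      (Nat.le_of_lt_succ ((ncard_lt_ncard hD'D hfin).trans_le hn))
    exact ⟨C, hC, hCD'.trans hD'D.subset⟩

lemma Matroid.Indep.exists_circuit'_insert (hI : M.Indep I) (hfin : I.Finite)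
    (hD : M.Dep (insert e I)) :
    ∃ C, M.Circuit' C ∧ C ⊆ insert e I ∧ e ∈ C := by
  obtain ⟨C, hC, hCI⟩ := hD.exists_circuit'_subset (hfin.insert e)
  refine ⟨C, hC, hCI, by_contra fun heC => ?_⟩
  exact hC.1.not_indep (hI.subset (((subset_insert_iff_of_notMem heC).1 hCI)))

/-- Key lemma: the cyclic part of a finite flat is a cyclic flat, and the rank of the flat
is the rank of the cyclic part plus the number of remaining (coloop) elements. -/
lemma Matroid.IsFlat.cyc_spec (hF : M.IsFlat F) (hfin : F.Finite) :
    M.CyclicFlat (M.cyc F) ∧ M.eRk' F = M.eRk' (M.cyc F) + (F \ M.cyc F).encard := by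
  set Z := M.cyc F with hZdef
  have hZF : Z ⊆ F := M.cyc_subset F
  have hFE : F ⊆ M.E := hF.subset_ground
  have hZE : Z ⊆ M.E := hZF.trans hFE
  have hcirc : ∀ C, M.Circuit' C → C ⊆ F → C ⊆ Z := fun C hC hCF x hx =>
    Matroid.mem_cyc_iff.2 ⟨C, hC, hCF, hx⟩
  obtain ⟨I, hI⟩ := M.exists_isBasis Z hZE
  obtain ⟨J, hJ, hIJ⟩ := hI.indep.subset_isBasis_of_subset (hI.subset.trans hZF) hFE
  have hFZJ : F \ Z ⊆ J := by
    rintro e ⟨heF, heZ⟩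
    by_contra heJ
    have hdep : M.Dep (insert e J) := hJ.indep.insert_dep_iff.2
      ⟨hJ.subset_closure heF, heJ⟩
    obtain ⟨C, hC, hCsub, heC⟩ := hJ.indep.exists_circuit'_insert
      (hfin.subset hJ.subset) hdep
    exact heZ (hcirc C hC (hCsub.trans (insert_subset heF hJ.subset)) heC)
  have hJZ : J ∩ Z = I := (hI.eq_of_subset_indep (hJ.indep.inter_right Z)
      (subset_inter hIJ hI.subset) inter_subset_right).symm
  have hJdiff : J \ Z = F \ Z :=
    subset_antisymm (fun e he => ⟨hJ.subset he.1, he.2⟩)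
      (fun e he => ⟨hFZJ he, he.2⟩)
  have hrk : M.eRk' F = M.eRk' Z + (F \ Z).encard := by
    rw [hJ.eRk'_eq, hI.eRk'_eq, ← hJZ, ← hJdiff, add_comm,
      encard_diff_add_encard_inter]
  have hclZ : M.closure Z ⊆ Z := by
    intro e he
    have heF : e ∈ F := hF.closure ▸ M.closure_subset_closure hZF he
    by_contra heZ
    have heI : e ∉ I := fun h => heZ (hI.subset h)
    have hdep : M.Dep (insert e I) := hI.indep.insert_dep_iff.2
      ⟨by rwa [hI.closure_eq_closure], heI⟩
    obtain ⟨C, hC, hCsub, heC⟩ := hI.indep.exists_circuit'_insert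
      (hfin.subset (hI.subset.trans hZF)) hdep
    exact heZ (hcirc C hC (hCsub.trans (insert_subset heF (hI.subset.trans hZF))) heC)
  have hflat : M.IsFlat Z := by
    have hcl : M.closure Z = Z := hclZ.antisymm (M.subset_closure Z hZE)
    exact hcl ▸ M.flat_closure Z
  have hcyc : Z = M.cyc Z := by
    refine subset_antisymm (fun e he => ?_) (M.cyc_subset Z)
    obtain ⟨C, hC, hCF, heC⟩ := Matroid.mem_cyc_iff.1 he
    exact Matroid.mem_cyc_iff.2 ⟨C, hC, hcirc C hC hCF, heC⟩
  exact ⟨⟨hflat, hcyc⟩, hrk⟩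

/-- A non-spanning flat is contained in a flat of rank one larger. -/
lemma Matroid.IsFlat.exists_flat_succ (hF : M.IsFlat F)
    (hlt : M.eRk' F < M.eRk' M.E) :
    ∃ G, M.IsFlat G ∧ F ⊆ G ∧ M.eRk' G = M.eRk' F + 1 := by
  have hFE : F ⊆ M.E := hF.subset_ground
  obtain ⟨I, hI⟩ := M.exists_isBasis F hFE
  obtain ⟨B, hB, hIB⟩ := hI.indep.exists_isBase_superset
  obtain ⟨e, heB, heI⟩ : ∃ e, e ∈ B ∧ e ∉ I := by
    by_contra h
    push_neg at h
    have hBsub : B ⊆ I := h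
    have hBI : B = I := hBsub.antisymm hIB
    rw [hI.eRk'_eq, ← hBI, ← hB.isBasis_ground.eRk'_eq] at hlt
    exact lt_irrefl _ hlt
  have heE : e ∈ M.E := hB.subset_ground heB
  have heF : e ∉ F := by
    intro heF
    have : M.Indep (insert e I) := hB.indep.subset (insert_subset heB hIB)
    exact heI (by simpa using (hI.eq_of_subset_indep this (subset_insert e I)
      (insert_subset heF hI.subset)) ▸ mem_insert e I)
  refine ⟨M.closure (insert e F), M.flat_closure _, ?_, ?_⟩
  · exact (subset_insert e F).trans (M.subset_closure _ (insert_subset heE hFE))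
  · have hbasis : M.IsBasis (insert e I) (insert e F) := by
      refine (hB.indep.subset (insert_subset heB hIB)).isBasis_of_subset_of_subset_closure
        (insert_subset_insert hI.subset) ?_
      refine insert_subset (M.subset_closure _ ((insert_subset heE hI.indep.subset_ground))
        (mem_insert e I)) ?_
      exact hI.subset_closure.trans (M.closure_subset_closure (subset_insert e I))
    rw [M.eRk'_closure (insert_subset heE hFE), hbasis.eRk'_eq, hI.eRk'_eq,
      encard_insert_of_notMem heI]

lemma Matroid.Flat.exists_flat_add (k : ℕ) :
    ∀ F, M.IsFlat F → M.eRk' F ≠ ⊤ → M.eRk' F + k ≤ M.eRk' M.E →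
      ∃ G, M.IsFlat G ∧ F ⊆ G ∧ M.eRk' G = M.eRk' F + k := by
  induction k with
  | zero => exact fun F hF _ _ => ⟨F, hF, Subset.rfl, by simp⟩
  | succ k ih =>
    intro F hF hfin hle
    have h1 : M.eRk' F + 1 ≤ M.eRk' M.E := by
      refine le_trans ?_ hle
      exact add_le_add_right (by exact_mod_cast Nat.one_le_iff_ne_zero.2 (Nat.succ_ne_zero k)) _
    have hlt : M.eRk' F < M.eRk' M.E := (ENat.add_one_le_iff hfin).1 h1
    obtain ⟨F', hF', hFF', hrk⟩ := hF.exists_flat_succ hlt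
    have hfin' : M.eRk' F' ≠ ⊤ := by
      rw [hrk, Ne, ENat.add_eq_top]
      simp [hfin]
    have hle' : M.eRk' F' + k ≤ M.eRk' M.E := by
      rw [hrk, add_assoc]
      convert hle using 2
      push_cast
      ring
    obtain ⟨G, hG, hF'G, hGrk⟩ := ih F' hF' hfin' hle'
    refine ⟨G, hG, hFF'.trans hF'G, ?_⟩
    rw [hGrk, hrk, add_assoc]
    congr 1
    push_cast
    ring

end Aux

/-- Let `N` be a cyclic reduction of a matroid `M` of rank at least `2`:
`{∅, cyc_M(E)} ⊆ Z(N) ⊆ Z(M)` and `rank_N = rank_M` on `Z(N)`. Then every flat `F` of `N`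
is contained in a flat `G` of `M` with `rank_N(F) = rank_M(G)`; in particular
`rank_M(A) ≤ rank_N(A)` for every `A ⊆ E`. -/
theorem cyclicReduction_flat_container (M N : Matroid α) [M.Finite]
    (hE : N.E = M.E) (hMr : (2 : ℕ∞) ≤ M.rk')
    (hempty : N.CyclicFlat ∅)
    (hcycE : N.CyclicFlat (M.cyc M.E))
    (hZ : ∀ Z, N.CyclicFlat Z → M.CyclicFlat Z)
    (hrank : ∀ Z, N.CyclicFlat Z → N.eRk' Z = M.eRk' Z) :
    (∀ F, N.IsFlat F → ∃ G, M.IsFlat G ∧ F ⊆ G ∧ N.eRk' F = M.eRk' G) ∧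
      ∀ A, A ⊆ M.E → M.eRk' A ≤ N.eRk' A := by
  classical
  have hEfin : M.E.Finite := M.ground_finite
  have hNEfin : N.E.Finite := hE ▸ hEfin
  -- rank of M is finite
  have hMEtop : M.eRk' M.E ≠ ⊤ :=
    fun h => (h ▸ M.eRk'_le_encard M.E).not_gt hEfin.encard_lt_top |>.elim
  -- N's total rank is at most M's
  have hNM : N.eRk' N.E ≤ M.eRk' M.E := by
    obtain ⟨_, hMrk⟩ := (M.ground_isFlat).cyc_spec hEfin
    have hW : N.eRk' (M.cyc M.E) = M.eRk' (M.cyc M.E) := hrank _ hcycE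
    calc N.eRk' N.E ≤ N.eRk' (M.cyc M.E) + (N.E \ M.cyc M.E).encard :=
          N.eRk'_le_add_encard_diff _ _
      _ = M.eRk' (M.cyc M.E) + (M.E \ M.cyc M.E).encard := by rw [hW, hE]
      _ = M.eRk' M.E := hMrk.symm
  have part1 : ∀ F, N.IsFlat F → ∃ G, M.IsFlat G ∧ F ⊆ G ∧ N.eRk' F = M.eRk' G := by
    intro F hF
    have hFE : F ⊆ M.E := hE ▸ hF.subset_ground
    have hFfin : F.Finite := hEfin.subset hFE
    obtain ⟨hZcf, hNrk⟩ := hF.cyc_spec hFfin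
    have hMcf := hZ _ hZcf
    have hr := hrank _ hZcf
    -- M-rank of F is at most N-rank of F
    have h1 : M.eRk' F ≤ N.eRk' F := by
      rw [hNrk, hr]
      exact M.eRk'_le_add_encard_diff F (N.cyc F)
    have h2 : N.eRk' F ≤ M.eRk' M.E :=
      (N.eRk'_mono hF.subset_ground).trans hNM
    have hbtop : N.eRk' F ≠ ⊤ := fun h => hMEtop (top_le_iff.1 (h ▸ h2))
    -- the closure of F in M
    have hclrk : M.eRk' (M.closure F) = M.eRk' F := M.eRk'_closure hFE
    have hatop : M.eRk' (M.closure F) ≠ ⊤ :=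
      fun h => hbtop (top_le_iff.1 (h ▸ hclrk ▸ h1))
    set a := M.eRk' (M.closure F) with ha
    set b := N.eRk' F with hb
    have hab : a ≤ b := hclrk.trans_le h1
    obtain ⟨k, hk⟩ : ∃ k : ℕ, b = a + k := by
      refine ⟨(b - a).toNat, ?_⟩
      have hba : b - a ≠ ⊤ := by
        intro h
        exact hbtop (top_le_iff.1 (le_trans (le_of_eq h.symm) tsub_le_self))
      rw [ENat.coe_toNat hba, add_tsub_cancel_of_le hab]
    have hka : a + k ≤ M.eRk' M.E := hk ▸ h2
    obtain ⟨G, hG, hFG, hGrk⟩ :=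
      Matroid.Flat.exists_flat_add k (M.closure F) (M.flat_closure F) hatop hka
    exact ⟨G, hG, (M.subset_closure F hFE).trans hFG, by rw [hGrk, ← hk]⟩
  refine ⟨part1, fun A hA => ?_⟩
  have hA' : A ⊆ N.E := hE ▸ hA
  obtain ⟨G, hG, hsub, hrk⟩ := part1 (N.closure A) (N.flat_closure A)
  have : M.eRk' A ≤ M.eRk' G := M.eRk'_mono ((N.subset_closure A hA').trans hsub)
  rw [← hrk, N.eRk'_closure hA'] at this
  exact this
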